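/- Let D = (C_1,…,C_r) be a northwest diagram with pairwise distinct columns. Then there is a permutation σ of {1,…,r} such that C_{σ(1)} <lex C_{σ(2)} <lex ⋯ <lex C_{σ(r)} and the rearranged diagram (C_{σ(1)},…,C_{σ(r)}) is again northwest. -/

import Mathlib

/-- A diagram, given as a list of columns `C : Fin r → Finset ℕ`, is *northwest* if
for all `j ≤ j'`, `i ∈ C j` and `i' ∈ C j'` imply `min i i' ∈ C j`. -/
def IsNorthwest {r : ℕ} (C : Fin r → Finset ℕ) : Prop :=
  ∀ j j' : Fin r, j ≤ j' → ∀ i ∈ C j, ∀ i' ∈ C j', min i i' ∈ C j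

/-- `A` is an *initial subset* of `B` : `A ⊊ B` and every element of `B \ A` is greater
than every element of `A`. -/
def InitSub (A B : Finset ℕ) : Prop :=
  A ⊂ B ∧ ∀ x ∈ B \ A, ∀ y ∈ A, y < x

/-- Lexicographic comparison of finite subsets of `ℕ`, comparing the increasing lists of
elements: `A <lex B` iff the sorted list of `A` is smaller than that of `B` in the
(strict) lexicographic order on lists (in particular a proper initial segment is
smaller). -/
def LexLT (A B : Finset ℕ) : Prop :=
  List.Lex (· < ·) (A.sort (· ≤ ·)) (B.sort (· ≤ ·))

/-- A list of columns is *lexicographic* if it is strictly increasing in `LexLT`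
(in particular the columns are pairwise distinct). -/
def IsLex {r : ℕ} (C : Fin r → Finset ℕ) : Prop :=
  ∀ a b : Fin r, a < b → LexLT (C a) (C b)

private lemma lex_prefix : ∀ {l₁ l₂ : List ℕ}, List.Lex (· < ·) l₁ l₂ →
    l₁.Pairwise (· < ·) → l₂.Pairwise (· < ·) →
    (∀ i ∈ l₁, ∀ i' ∈ l₂, i ≤ i' → i ∈ l₂) → l₁ <+: l₂ := by
  intro l₁ l₂ hlex
  induction hlex with
  | nil => intro _ _ _; exact List.nil_prefix
  | @cons a t₁ t₂ h ih =>
    intro h₁ h₂ ddc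
    rw [List.pairwise_cons] at h₁ h₂
    refine (List.cons_prefix_cons).2 ⟨rfl, ih h₁.2 h₂.2 ?_⟩
    intro i hi i' hi' hle
    have : i ∈ a :: t₂ := ddc i (List.mem_cons_of_mem _ hi) i' (List.mem_cons_of_mem _ hi') hle
    rcases List.mem_cons.1 this with h' | h'
    · exact absurd (h₁.1 i hi) (by omega)
    · exact h'
  | @rel a t₁ b t₂ hab =>
    intro h₁ h₂ ddc
    exfalso
    have : a ∈ b :: t₂ := ddc a List.mem_cons_self b List.mem_cons_self (le_of_lt hab)
    rw [List.pairwise_cons] at h₂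
    rcases List.mem_cons.1 this with h' | h'
    · omega
    · exact absurd (h₂.1 a h') (by omega)

/-- Key lemma: if `B` absorbs every element of `A` below it, and `A <lex B`, then
`A` is an initial segment of `B`, hence mins land in `A`. -/
private lemma min_mem_of_lex {A B : Finset ℕ}
    (ddc : ∀ i ∈ A, ∀ i' ∈ B, i ≤ i' → i ∈ B) (hlex : LexLT A B) :
    ∀ i ∈ A, ∀ i' ∈ B, min i i' ∈ A := by
  have hpre : A.sort (· ≤ ·) <+: B.sort (· ≤ ·) := by
    refine lex_prefix hlex (Finset.sortedLT_sort A).pairwise (Finset.sortedLT_sort B).pairwise ?_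
    intro i hi i' hi' hle
    rw [Finset.mem_sort] at *
    exact ddc i hi i' hi' hle
  obtain ⟨s, hs⟩ := hpre
  have hsort : ((A.sort (· ≤ ·)) ++ s).Pairwise (· < ·) := by
    rw [hs]; exact (Finset.sortedLT_sort B).pairwise
  rw [List.pairwise_append] at hsort
  have hinit : ∀ x ∈ B, x ∉ A → ∀ y ∈ A, y < x := by
    intro x hx hxA y hy
    have hxl : x ∈ (A.sort (· ≤ ·)) ++ s := by rw [hs]; exact (Finset.mem_sort _).2 hx
    rcases List.mem_append.1 hxl with h' | h'
    · exact absurd ((Finset.mem_sort _).1 h') hxA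
    · exact hsort.2.2 y ((Finset.mem_sort _).2 hy) x h'
  intro i hi i' hi'
  rcases le_total i i' with h | h
  · rwa [min_eq_left h]
  · rw [min_eq_right h]
    by_contra hA
    exact absurd (hinit i' hi' hA i hi) (by omega)

/-- A northwest diagram with pairwise distinct columns can be rearranged into
lexicographic order, and the rearranged diagram is again northwest. -/
theorem northwest_lex_rearrangement (r : ℕ) (C : Fin r → Finset ℕ)
    (hNW : IsNorthwest C) (hinj : Function.Injective C) :
    ∃ σ : Equiv.Perm (Fin r),
      IsLex (fun j => C (σ j)) ∧ IsNorthwest (fun j => C (σ j)) := by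
  set f : Fin r → List ℕ := fun j => (C j).sort (· ≤ ·) with hf
  have hfinj : Function.Injective f := by
    intro a b hab
    apply hinj
    have := congrArg (fun l : List ℕ => l.toFinset) hab
    simpa [hf, Finset.sort_toFinset] using this
  set σ : Equiv.Perm (Fin r) := Tuple.sort f with hσ
  have hmono : StrictMono (f ∘ σ) :=
    (Tuple.monotone_sort f).strictMono_of_injective (hfinj.comp σ.injective)
  have hislex : IsLex (fun j => C (σ j)) := by
    intro a b hab
    have : f (σ a) < f (σ b) := hmono hab
    exact this
  refine ⟨σ, hislex, ?_⟩
  intro a b hab i hi i' hi'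
  simp only at hi hi' ⊢
  rcases eq_or_lt_of_le hab with h | h
  · subst h
    rcases le_total i i' with h' | h'
    · rwa [min_eq_left h']
    · rwa [min_eq_right h']
  · have hlex : LexLT (C (σ a)) (C (σ b)) := hislex a b h
    rcases le_total (σ a) (σ b) with hj | hj
    · exact hNW (σ a) (σ b) hj i hi i' hi'
    · refine min_mem_of_lex ?_ hlex i hi i' hi'
      intro x hx y hy hle
      have := hNW (σ b) (σ a) hj y hy x hx
      rwa [min_eq_right hle] at this
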